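/- For n×n Hermitian complex matrices X₁, X₂ and n×n positive semidefinite complex matrices S₁, S₂, one has Tr[X₁S₁X₁S₂] + Tr[X₂S₁X₂S₂] ≥ 2·|Tr[X₁S₁X₂S₂]|, where the two traces on the left-hand side are nonnegative real numbers and |·| denotes the complex modulus. -/

import Mathlib

open Matrix ComplexOrder

open scoped MatrixOrder in
noncomputable def Matrix.PosSemidef.sqrt {n : ℕ} {A : Matrix (Fin n) (Fin n) ℂ} (_ : A.PosSemidef) :
    Matrix (Fin n) (Fin n) ℂ := CFC.sqrt A

open scoped MatrixOrder in
lemma Matrix.PosSemidef.posSemidef_sqrt {n : ℕ} {A : Matrix (Fin n) (Fin n) ℂ} (hA : A.PosSemidef) :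
    hA.sqrt.PosSemidef := (CFC.sqrt_nonneg A).posSemidef

open scoped MatrixOrder in
lemma Matrix.PosSemidef.sqrt_mul_self {n : ℕ} {A : Matrix (Fin n) (Fin n) ℂ} (hA : A.PosSemidef) :
    hA.sqrt * hA.sqrt = A := CFC.sqrt_mul_sqrt_self A hA.nonneg

noncomputable def mvec {n : ℕ} (M : Matrix (Fin n) (Fin n) ℂ) :
    EuclideanSpace ℂ (Fin n × Fin n) := (WithLp.equiv 2 _).symm (fun p => M p.1 p.2)

lemma inner_mvec {n : ℕ} (M N : Matrix (Fin n) (Fin n) ℂ) :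
    (inner ℂ (mvec M) (mvec N) : ℂ) = (Mᴴ * N).trace := by
  simp only [mvec, PiLp.inner_apply, Matrix.trace, Matrix.mul_apply, Matrix.diag,
    Matrix.conjTranspose_apply, Fintype.sum_prod_type, RCLike.inner_apply,
    WithLp.equiv_symm_apply, PiLp.toLp_apply]
  rw [Finset.sum_comm]
  simp [mul_comm]

lemma trace_key {n : ℕ} {S₁ S₂ : Matrix (Fin n) (Fin n) ℂ}
    (hS₁ : S₁.PosSemidef) (hS₂ : S₂.PosSemidef)
    (X Y : Matrix (Fin n) (Fin n) ℂ) (hX : X.IsHermitian) :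
    (X * S₁ * Y * S₂).trace =
      inner ℂ (mvec (hS₁.sqrt * X * hS₂.sqrt)) (mvec (hS₁.sqrt * Y * hS₂.sqrt)) := by
  rw [inner_mvec]
  have hA : hS₁.sqrt.IsHermitian := hS₁.posSemidef_sqrt.isHermitian
  have hB : hS₂.sqrt.IsHermitian := hS₂.posSemidef_sqrt.isHermitian
  rw [conjTranspose_mul, conjTranspose_mul, hA.eq, hB.eq, hX.eq]
  rw [show hS₂.sqrt * (X * hS₁.sqrt) * (hS₁.sqrt * Y * hS₂.sqrt)
      = hS₂.sqrt * (X * (hS₁.sqrt * hS₁.sqrt) * Y * hS₂.sqrt) from by noncomm_ring,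
    hS₁.sqrt_mul_self]
  conv_rhs => rw [Matrix.trace_mul_comm, Matrix.mul_assoc (X * S₁ * Y), hS₂.sqrt_mul_self]

theorem trace_hermitian_pair_ineq {n : ℕ} (X₁ X₂ S₁ S₂ : Matrix (Fin n) (Fin n) ℂ)
    (hX₁ : X₁.IsHermitian) (hX₂ : X₂.IsHermitian)
    (hS₁ : S₁.PosSemidef) (hS₂ : S₂.PosSemidef) :
    ((X₁ * S₁ * X₁ * S₂).trace).im = 0 ∧ 0 ≤ ((X₁ * S₁ * X₁ * S₂).trace).re ∧
    ((X₂ * S₁ * X₂ * S₂).trace).im = 0 ∧ 0 ≤ ((X₂ * S₁ * X₂ * S₂).trace).re ∧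
    ((X₁ * S₁ * X₁ * S₂).trace).re + ((X₂ * S₁ * X₂ * S₂).trace).re ≥
      2 * ‖(X₁ * S₁ * X₂ * S₂).trace‖ := by
  set u := mvec (hS₁.sqrt * X₁ * hS₂.sqrt) with hu
  set v := mvec (hS₁.sqrt * X₂ * hS₂.sqrt) with hv
  have h11 : (X₁ * S₁ * X₁ * S₂).trace = ((‖u‖ : ℂ))^2 := by
    rw [trace_key hS₁ hS₂ X₁ X₁ hX₁]; exact inner_self_eq_norm_sq_to_K u
  have h22 : (X₂ * S₁ * X₂ * S₂).trace = ((‖v‖ : ℂ))^2 := by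
    rw [trace_key hS₁ hS₂ X₂ X₂ hX₂]; exact inner_self_eq_norm_sq_to_K v
  have h12 : (X₁ * S₁ * X₂ * S₂).trace = inner ℂ u v := by
    rw [trace_key hS₁ hS₂ X₁ X₂ hX₁]
  have hcs : ‖(X₁ * S₁ * X₂ * S₂).trace‖ ≤ ‖u‖ * ‖v‖ := by
    rw [h12]; exact norm_inner_le_norm u v
  refine ⟨by simp [h11, ← Complex.ofReal_pow], by simp [h11, ← Complex.ofReal_pow, sq_nonneg],
    by simp [h22, ← Complex.ofReal_pow], by simp [h22, ← Complex.ofReal_pow, sq_nonneg], ?_⟩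
  rw [h11, h22]
  simp only [← Complex.ofReal_pow, Complex.ofReal_re]
  calc 2 * ‖(X₁ * S₁ * X₂ * S₂).trace‖ ≤ 2 * (‖u‖ * ‖v‖) := by linarith
    _ ≤ ‖u‖^2 + ‖v‖^2 := by have := two_mul_le_add_sq ‖u‖ ‖v‖; linarith
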